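/- Consider the two-population nonatomic congestion game on resources $\{e, f, g\}$ where population 1 has demand $1/2$ and strategies $\{\{e\}, \{f, g\}\}$, population 2 has demand $1/2$ and single strategy $\{f\}$, with cost functions $c_e(t) = 1$, $c_f(t) = t$, $c_g(t) = 3$. In the unique Wardrop equilibrium, population 1 plays $\{e\}$ with private cost $1$ and population 2 has private cost $1/2$. If $c_g$ is reduced to $\bar{c}_g(t) = 0$ (other costs unchanged), then in the unique new Wardrop equilibrium population 1 plays $\{f,g\}$ and population 2's private cost increases to $1$. Hence this family of set systems admits the strong Braess paradox. -/

import Mathlib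

/-!  The two-population game on resources `{e, f, g} = {0, 1, 2}` (as `Fin 3`):
population 1 has demand `1/2` and strategies `{{e}, {f,g}}`, population 2 has
demand `1/2` and the single strategy `{f}`.  A strategy distribution is
parametrized by the amount `p ∈ [0, 1/2]` population 1 puts on `{e}`
(the rest, `1/2 - p`, goes on `{f,g}`, and population 2 puts everything
on `{f}`). -/

/-- The load vector induced by the distribution parameter `p`. -/
noncomputable def load (p : ℝ) : Fin 3 → ℝ := ![p, (1 : ℝ) - p, 1/2 - p]

/-- Original cost functions: `c_e = 1`, `c_f(t) = t`, `c_g = 3`. -/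
noncomputable def cOrig : Fin 3 → ℝ → ℝ := ![fun _ => 1, fun t => t, fun _ => 3]

/-- Reduced cost functions: `c_g` lowered from `3` to `0`. -/
noncomputable def cNew : Fin 3 → ℝ → ℝ := ![fun _ => 1, fun t => t, fun _ => 0]

/-- Wardrop equilibrium: every strategy carrying positive mass has minimal cost. -/
noncomputable def isWardrop (c : Fin 3 → ℝ → ℝ) (p : ℝ) : Prop :=
  0 ≤ p ∧ p ≤ 1/2 ∧
  (0 < p → c 0 (load p 0) ≤ c 1 (load p 1) + c 2 (load p 2)) ∧
  (p < 1/2 → c 1 (load p 1) + c 2 (load p 2) ≤ c 0 (load p 0))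

theorem stmt18 :
    (∀ p : ℝ, isWardrop cOrig p ↔ p = 1/2) ∧
    (∀ p : ℝ, isWardrop cNew p ↔ p = 0) ∧
    cOrig 0 (load (1/2) 0) = 1 ∧
    cOrig 1 (load (1/2) 1) = 1/2 ∧
    cNew 1 (load 0 1) = 1 ∧
    cOrig 1 (load (1/2) 1) < cNew 1 (load 0 1) := by
  simp only [isWardrop, load, cOrig, cNew]
  norm_num [Matrix.cons_val_zero, Matrix.cons_val_one, Matrix.head_cons, Matrix.cons_val_two, Matrix.tail_cons]
  constructor
  · intro p
    constructor
    · rintro ⟨h0, h1, h2, h3⟩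
      by_contra h
      have := h3 (lt_of_le_of_ne h1 h)
      linarith
    · rintro rfl; norm_num
  · intro p
    constructor
    · rintro ⟨h0, h1, h2, h3⟩
      by_contra h
      have := h2 (lt_of_le_of_ne h0 (Ne.symm h))
      exact h (le_antisymm this h0)
    · rintro rfl; norm_num
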